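/- arXiv:2602.03682 — 7 statements merged into one kernel-verified Lean document; each statement's English description precedes it below -/
import Mathlib

section
/- For all t ≥ 0 and all x ∈ [0, 2√β], |p_t(x)| ≤ (√β)^t and |q_t(x)| ≤ (t+1)·(√β)^t. -/
lemma cos_rec' (a θ : ℝ) :
    Real.cos (a + θ) = 2 * Real.cos θ * Real.cos a - Real.cos (a - θ) := by
  rw [Real.cos_add, Real.cos_sub]; ring

lemma sin_rec' (a θ : ℝ) :
    Real.sin (a + θ) = 2 * Real.cos θ * Real.sin a - Real.sin (a - θ) := by
  rw [Real.sin_add, Real.sin_sub]; ring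

lemma abs_sin_nat_mul_le' (θ : ℝ) : ∀ n : ℕ, |Real.sin (n * θ)| ≤ n * |Real.sin θ| := by
  intro n
  induction n with
  | zero => simp
  | succ n ih =>
    have h : Real.sin ((n + 1 : ℕ) * θ)
        = Real.sin (n * θ) * Real.cos θ + Real.cos (n * θ) * Real.sin θ := by
      push_cast; rw [add_mul, one_mul, Real.sin_add]
    rw [h]
    calc |Real.sin (n * θ) * Real.cos θ + Real.cos (n * θ) * Real.sin θ|
        ≤ |Real.sin (n * θ)| * |Real.cos θ| + |Real.cos (n * θ)| * |Real.sin θ| := by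
          refine (abs_add_le _ _).trans ?_; rw [abs_mul, abs_mul]
      _ ≤ (n * |Real.sin θ|) * 1 + 1 * |Real.sin θ| :=
          add_le_add (mul_le_mul ih (Real.abs_cos_le_one θ) (abs_nonneg _)
            (by positivity))
            (mul_le_mul_of_nonneg_right (Real.abs_cos_le_one _) (abs_nonneg _))
      _ = (n + 1 : ℕ) * |Real.sin θ| := by push_cast; ring

/-- for all t ≥ 0 and x ∈ [0, 2√β],
|p_t(x)| ≤ (√β)^t and |q_t(x)| ≤ (t+1)(√β)^t. -/
theorem stmt2 (β : ℝ) (hβ : 0 < β) (p q : ℕ → ℝ → ℝ)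
    (hp0 : ∀ x, p 0 x = 1) (hp1 : ∀ x, p 1 x = x / 2)
    (hprec : ∀ t x, p (t + 2) x = x * p (t + 1) x - β * p t x)
    (hq0 : ∀ x, q 0 x = 1) (hq1 : ∀ x, q 1 x = x)
    (hqrec : ∀ t x, q (t + 2) x = x * q (t + 1) x - β * q t x)
    (t : ℕ) (x : ℝ) (hx : x ∈ Set.Icc 0 (2 * Real.sqrt β)) :
    |p t x| ≤ Real.sqrt β ^ t ∧ |q t x| ≤ (t + 1) * Real.sqrt β ^ t := by
  set s := Real.sqrt β with hs_def
  have hs : 0 < s := Real.sqrt_pos.mpr hβ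
  have hβs : β = s ^ 2 := (Real.sq_sqrt hβ.le).symm
  obtain ⟨hx0, hx2⟩ := hx
  set c : ℝ := x / (2 * s) with hc_def
  have hc0 : 0 ≤ c := div_nonneg hx0 (by positivity)
  have hc1 : c ≤ 1 := (div_le_one (by positivity)).mpr hx2
  set θ : ℝ := Real.arccos c with hθ_def
  have hcos : Real.cos θ = c := Real.cos_arccos (by linarith) hc1
  have hxe : x = 2 * s * Real.cos θ := by
    rw [hcos, hc_def]; field_simp
  -- key closed forms, by two-step induction
  have key : ∀ n : ℕ,
      (p n x = s ^ n * Real.cos (n * θ) ∧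
        q n x * Real.sin θ = s ^ n * Real.sin ((n + 1) * θ)) ∧
      (p (n + 1) x = s ^ (n + 1) * Real.cos ((n + 1) * θ) ∧
        q (n + 1) x * Real.sin θ = s ^ (n + 1) * Real.sin ((n + 2) * θ)) := by
    intro n
    induction n with
    | zero =>
      refine ⟨⟨by simp [hp0], by simp [hq0]⟩, ⟨?_, ?_⟩⟩
      · rw [hp1, hxe]; push_cast; ring_nf
      · rw [hq1, hxe]
        have : ((0 : ℕ) + 2 : ℝ) * θ = 2 * θ := by norm_num
        rw [this, Real.sin_two_mul]; push_cast; ring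
    | succ n ih =>
      obtain ⟨⟨hpn, hqn⟩, hp', hq'⟩ := ih
      refine ⟨⟨by exact_mod_cast hp', by exact_mod_cast hq'⟩, ?_, ?_⟩
      · have harg1 : ((n : ℝ) + 1 + 1) * θ = ((n : ℝ) + 1) * θ + θ := by ring
        have harg2 : ((n : ℝ)) * θ = ((n : ℝ) + 1) * θ - θ := by ring
        have := cos_rec' (((n : ℝ) + 1) * θ) θ
        rw [hprec, hp', hpn, hxe]
        push_cast
        rw [harg1, this, ← harg2, hβs]
        ring
      · have harg1 : ((n : ℝ) + 1 + 2) * θ = ((n : ℝ) + 2) * θ + θ := by ring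
        have harg2 : ((n : ℝ) + 1) * θ = ((n : ℝ) + 2) * θ - θ := by ring
        have := sin_rec' (((n : ℝ) + 2) * θ) θ
        have hq2 : q (n + 2) x * Real.sin θ
            = x * (q (n + 1) x * Real.sin θ) - β * (q n x * Real.sin θ) := by
          rw [hqrec]; ring
        rw [hq2, hq', hqn, hxe]
        push_cast
        rw [harg1, this, ← harg2, hβs]
        ring
  obtain ⟨⟨hpt, hqt⟩, _⟩ := key t
  constructor
  · rw [hpt, abs_mul, abs_of_pos (pow_pos hs t)]
    calc s ^ t * |Real.cos (t * θ)| ≤ s ^ t * 1 := by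
          gcongr; exact Real.abs_cos_le_one _
      _ = s ^ t := mul_one _
  · by_cases hsin : Real.sin θ = 0
    · -- then cos θ = 1 (since cos θ = c ≥ 0), x = 2s, and q t x = (t+1) s^t
      have hcos1 : Real.cos θ = 1 := by
        have h := Real.sin_sq_add_cos_sq θ
        rw [hsin] at h
        have hcsq : Real.cos θ ^ 2 = 1 := by nlinarith
        have hcge : 0 ≤ Real.cos θ := hcos ▸ hc0
        nlinarith
      have hx2s : x = 2 * s := by rw [hxe, hcos1]; ring
      have hqval : ∀ n : ℕ, q n x = (n + 1) * s ^ n ∧ q (n + 1) x = (n + 2) * s ^ (n + 1) := by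
        intro n
        induction n with
        | zero => constructor <;> simp [hq0, hq1, hx2s]
        | succ n ih =>
          constructor
          · rw [ih.2]; push_cast; ring
          · rw [hqrec, ih.1, ih.2, hx2s, hβs]; push_cast; ring
      rw [(hqval t).1, abs_of_nonneg (by positivity)]
    · have habs : |Real.sin θ| > 0 := abs_pos.mpr hsin
      have h1 : |q t x| * |Real.sin θ| = s ^ t * |Real.sin ((t + 1) * θ)| := by
        rw [← abs_mul, hqt, abs_mul, abs_of_pos (pow_pos hs t)]
      have h2 : |Real.sin ((t + 1) * θ)| ≤ (t + 1) * |Real.sin θ| := by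
        have := abs_sin_nat_mul_le' θ (t + 1)
        push_cast at this ⊢
        exact this
      have h3 : |q t x| * |Real.sin θ| ≤ ((t + 1) * s ^ t) * |Real.sin θ| := by
        rw [h1]
        calc s ^ t * |Real.sin ((t + 1) * θ)| ≤ s ^ t * ((t + 1) * |Real.sin θ|) := by
              gcongr
          _ = ((t + 1) * s ^ t) * |Real.sin θ| := by ring
      exact le_of_mul_le_mul_right h3 habs
end

section
/- Let c ∈ (0, 1/2) and β, λ > 0 with 4β ≤ λ², and let Δ ∈ [0,1] with 2√β = (1−Δ)λ. Consider any sequence of k×k real matrices G_t with G_0 = (I/2 + E_0)^{-1} and G_{t+1} = (I − (β/λ²)·G_t' + E_{t+1})^{-1}, where at each step ‖E_t‖₂ ≤ cΔ and G_t' is any matrix with ‖G_t'‖₂ ≤ ‖G_t‖₂ (e.g. G_t' = Λ^{-1}G_tΛ^{-1}λ² for diagonal Λ with entries ≥ λ). Then all inverses exist and ‖G_t‖₂ ≤ 1/(1/2 − cΔ) for all t ≥ 0. -/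
open Matrix

/-- Spectral norm (largest singular value) of a real matrix. -/
noncomputable def specNorm {m n : ℕ} (M : Matrix (Fin m) (Fin n) ℝ) : ℝ :=
  sSup {r | ∃ v : EuclideanSpace ℝ (Fin n), ‖v‖ = 1 ∧
    r = ‖(WithLp.equiv 2 (Fin m → ℝ)).symm (M.mulVec (WithLp.equiv 2 (Fin n → ℝ) v))‖}

/-- Smallest singular value of a real matrix. -/
noncomputable def sigmaMin {m n : ℕ} (M : Matrix (Fin m) (Fin n) ℝ) : ℝ :=
  sInf {r | ∃ v : EuclideanSpace ℝ (Fin n), ‖v‖ = 1 ∧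
    r = ‖(WithLp.equiv 2 (Fin m → ℝ)).symm (M.mulVec (WithLp.equiv 2 (Fin n → ℝ) v))‖}

lemma specNorm_zero_dim (M : Matrix (Fin 0) (Fin 0) ℝ) : specNorm M = 0 := by
  unfold specNorm
  have : {r | ∃ v : EuclideanSpace ℝ (Fin 0), ‖v‖ = 1 ∧
      r = ‖(WithLp.equiv 2 (Fin 0 → ℝ)).symm (M.mulVec (WithLp.equiv 2 (Fin 0 → ℝ) v))‖}
      = (∅ : Set ℝ) := by
    ext r
    simp only [Set.mem_setOf_eq, Set.mem_empty_iff_false, iff_false, not_exists]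
    rintro v ⟨hv, -⟩
    have h0 : ‖v‖ = 0 := by
      rw [EuclideanSpace.norm_eq]
      simp
    rw [h0] at hv
    norm_num at hv
  rw [this, Real.sSup_empty]

lemma specNorm_eq_opNorm {k : ℕ} (hk : 0 < k) (M : Matrix (Fin k) (Fin k) ℝ) :
    specNorm M = ‖toEuclideanCLM (𝕜 := ℝ) M‖ := by
  haveI : Nonempty (Fin k) := ⟨⟨0, hk⟩⟩
  set f := toEuclideanCLM (𝕜 := ℝ) M with hf
  have happ : ∀ v : EuclideanSpace ℝ (Fin k),
      (WithLp.equiv 2 (Fin k → ℝ)).symm (M.mulVec (WithLp.equiv 2 (Fin k → ℝ) v)) = f v :=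
    fun v => rfl
  have hS : specNorm M = sSup {r | ∃ v : EuclideanSpace ℝ (Fin k), ‖v‖ = 1 ∧ r = ‖f v‖} := by
    unfold specNorm
    congr 1
  rw [hS]
  set S := {r | ∃ v : EuclideanSpace ℝ (Fin k), ‖v‖ = 1 ∧ r = ‖f v‖} with hSdef
  obtain ⟨v0, hv0⟩ := exists_norm_eq (EuclideanSpace ℝ (Fin k)) (zero_le_one)
  have hne : S.Nonempty := ⟨‖f v0‖, v0, hv0, rfl⟩
  have hbdd : BddAbove S := by
    refine ⟨‖f‖, ?_⟩
    rintro r ⟨v, hv, rfl⟩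
    exact f.unit_le_opNorm v hv.le
  refine le_antisymm (csSup_le hne ?_) ?_
  · rintro r ⟨v, hv, rfl⟩
    exact f.unit_le_opNorm v hv.le
  · have h0 : (0:ℝ) ≤ sSup S :=
      le_trans (norm_nonneg (f v0)) (le_csSup hbdd ⟨v0, hv0, rfl⟩)
    refine f.opNorm_le_bound h0 ?_
    intro x
    rcases eq_or_ne x 0 with rfl | hx
    · simp
    · have hnx : ‖x‖ ≠ 0 := norm_ne_zero_iff.mpr hx
      set v : EuclideanSpace ℝ (Fin k) := ‖x‖⁻¹ • x with hvdef
      have hv : ‖v‖ = 1 := by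
        rw [hvdef, norm_smul, norm_inv, norm_norm, inv_mul_cancel₀ hnx]
      have hmem : ‖f v‖ ≤ sSup S := le_csSup hbdd ⟨v, hv, rfl⟩
      have hfx : ‖f x‖ = ‖x‖ * ‖f v‖ := by
        rw [hvdef, f.map_smul, norm_smul, norm_inv, norm_norm]
        field_simp
      rw [hfx, mul_comm]
      exact mul_le_mul_of_nonneg_right hmem (norm_nonneg x)

/-- Norm bound for inverses in a complete normed ring. -/
lemma norm_inv_le_of_norm_lt_one {R : Type*} [NormedRing R] [NormOneClass R]
    {t u : R} (ht : ‖t‖ < 1) (hu : (1 - t) * u = 1) :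
    ‖u‖ ≤ (1 - ‖t‖)⁻¹ := by
  have h1 : u = 1 + t * u := by
    have h2 : u - t * u = 1 := by rw [← one_sub_mul]; exact hu
    rw [sub_eq_iff_eq_add] at h2
    exact h2
  have h3 : ‖u‖ ≤ 1 + ‖t‖ * ‖u‖ := by
    calc ‖u‖ = ‖1 + t * u‖ := by rw [← h1]
    _ ≤ ‖(1:R)‖ + ‖t * u‖ := norm_add_le _ _
    _ ≤ 1 + ‖t‖ * ‖u‖ := by rw [norm_one]; exact add_le_add le_rfl (norm_mul_le t u)
  have h4 : (0:ℝ) < 1 - ‖t‖ := by linarith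
  rw [← one_div, le_div_iff₀ h4]
  nlinarith

set_option synthInstance.maxHeartbeats 1000000 in
lemma matrix_one_sub_inv {k : ℕ} (hk : 0 < k) (T : Matrix (Fin k) (Fin k) ℝ)
    (h : specNorm T < 1) :
    IsUnit ((1 : Matrix (Fin k) (Fin k) ℝ) - T) ∧
      specNorm ((1 : Matrix (Fin k) (Fin k) ℝ) - T)⁻¹ ≤ (1 - specNorm T)⁻¹ := by
  haveI : Nonempty (Fin k) := ⟨⟨0, hk⟩⟩
  set e := (toEuclideanCLM (𝕜 := ℝ) (n := Fin k)) with he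
  have hnorm : ‖e T‖ < 1 := by rw [← specNorm_eq_opNorm hk]; exact h
  have hU : IsUnit ((1 : EuclideanSpace ℝ (Fin k) →L[ℝ] EuclideanSpace ℝ (Fin k)) - e T) :=
    isUnit_one_sub_of_norm_lt_one hnorm
  obtain ⟨u, hu⟩ := hU
  have hsymm : e.symm ↑u = 1 - T := by
    rw [hu, map_sub, _root_.map_one, e.symm_apply_apply]
  have hUnit : IsUnit ((1 : Matrix (Fin k) (Fin k) ℝ) - T) := by
    refine ⟨⟨1 - T, e.symm ↑u⁻¹, ?_, ?_⟩, rfl⟩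
    · calc ((1 : Matrix (Fin k) (Fin k) ℝ) - T) * e.symm ↑u⁻¹
          = e.symm ↑u * e.symm ↑u⁻¹ := by rw [hsymm]
        _ = e.symm (↑u * ↑u⁻¹) := (_root_.map_mul e.symm _ _).symm
        _ = 1 := by rw [u.mul_inv, _root_.map_one]
    · calc e.symm ↑u⁻¹ * ((1 : Matrix (Fin k) (Fin k) ℝ) - T)
          = e.symm ↑u⁻¹ * e.symm ↑u := by rw [hsymm]
        _ = e.symm (↑u⁻¹ * ↑u) := (_root_.map_mul e.symm _ _).symm
        _ = 1 := by rw [u.inv_mul, _root_.map_one]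
  refine ⟨hUnit, ?_⟩
  have hdet : IsUnit ((1 : Matrix (Fin k) (Fin k) ℝ) - T).det :=
    (Matrix.isUnit_iff_isUnit_det _).mp hUnit
  have hmul : ((1 : Matrix (Fin k) (Fin k) ℝ) - T) * (1 - T)⁻¹ = 1 :=
    Matrix.mul_nonsing_inv _ hdet
  have hmul' : ((1 : EuclideanSpace ℝ (Fin k) →L[ℝ] EuclideanSpace ℝ (Fin k)) - e T)
      * e ((1 - T)⁻¹) = 1 := by
    have := congrArg e hmul
    rwa [_root_.map_mul, map_sub, _root_.map_one] at this
  rw [specNorm_eq_opNorm hk, specNorm_eq_opNorm hk]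
  exact norm_inv_le_of_norm_lt_one hnorm hmul'

set_option synthInstance.maxHeartbeats 1000000 in
set_option maxHeartbeats 2000000 in
/-- the perturbed matrix Riccati recursion
G_0 = (I/2 + E_0)⁻¹, G_{t+1} = (I − (β/λ²)G_t' + E_{t+1})⁻¹, with
‖E_t‖₂ ≤ cΔ and ‖G_t'‖₂ ≤ ‖G_t‖₂, is well defined (all the matrices being
inverted are invertible) and ‖G_t‖₂ ≤ 1/(1/2 − cΔ) for all t. -/
theorem stmt7 (k : ℕ) (c β lam Δ : ℝ)
    (hc : c ∈ Set.Ioo (0:ℝ) (1/2)) (hβ : 0 < β) (hlam : 0 < lam)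
    (h4β : 4 * β ≤ lam ^ 2) (hΔ : Δ ∈ Set.Icc (0:ℝ) 1)
    (hΔβ : 2 * Real.sqrt β = (1 - Δ) * lam)
    (G G' E : ℕ → Matrix (Fin k) (Fin k) ℝ)
    (hE : ∀ t, specNorm (E t) ≤ c * Δ)
    (hG' : ∀ t, specNorm (G' t) ≤ specNorm (G t))
    (hG0 : G 0 = ((1/2 : ℝ) • (1 : Matrix (Fin k) (Fin k) ℝ) + E 0)⁻¹)
    (hGrec : ∀ t, G (t + 1)
      = ((1 : Matrix (Fin k) (Fin k) ℝ) - (β / lam ^ 2) • G' t + E (t + 1))⁻¹) :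
    IsUnit ((1/2 : ℝ) • (1 : Matrix (Fin k) (Fin k) ℝ) + E 0) ∧
      (∀ t, IsUnit
        ((1 : Matrix (Fin k) (Fin k) ℝ) - (β / lam ^ 2) • G' t + E (t + 1))) ∧
      ∀ t, specNorm (G t) ≤ 1 / (1/2 - c * Δ) := by
  obtain ⟨hc0, hc2⟩ := hc
  obtain ⟨hΔ0, hΔ1⟩ := hΔ
  have hcd : c * Δ < 1/2 := by nlinarith
  have hcd0 : 0 ≤ c * Δ := mul_nonneg hc0.le hΔ0
  have hBpos : (0:ℝ) < 1/2 - c * Δ := by linarith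
  rcases Nat.eq_zero_or_pos k with rfl | hk
  · haveI : Subsingleton (Matrix (Fin 0) (Fin 0) ℝ) :=
      ⟨fun A B' => by ext i j; exact i.elim0⟩
    refine ⟨isUnit_of_subsingleton _, fun t => isUnit_of_subsingleton _, fun t => ?_⟩
    rw [specNorm_zero_dim]
    positivity
  · -- positive dimension
    set a : ℝ := β / lam ^ 2 with hadef
    set B : ℝ := 1 / (1/2 - c * Δ) with hBdef
    have hlam2 : (0:ℝ) < lam ^ 2 := by positivity
    have ha : a = (1 - Δ)^2 / 4 := by
      have hb : Real.sqrt β ^ 2 = β := Real.sq_sqrt hβ.le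
      have h2 : 4 * β = (1 - Δ)^2 * lam ^ 2 := by nlinarith [congrArg (· ^ 2) hΔβ]
      rw [hadef]
      field_simp
      linarith
    have ha0 : 0 ≤ a := by rw [ha]; positivity
    have haB : a * B ≤ 1/2 := by
      have h1 : a * B = a / (1/2 - c * Δ) := by rw [hBdef, mul_one_div]
      rw [h1, div_le_iff₀ hBpos, ha]
      nlinarith
    have hB2 : B = (1/2 - c * Δ)⁻¹ := one_div _
    -- triangle inequality for specNorm of s • A - C
    have tri : ∀ (s : ℝ) (A C : Matrix (Fin k) (Fin k) ℝ),
        specNorm (s • A - C) ≤ |s| * specNorm A + specNorm C := by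
      intro s A C
      rw [specNorm_eq_opNorm hk, specNorm_eq_opNorm hk, specNorm_eq_opNorm hk,
        map_sub, _root_.map_smul]
      calc ‖s • toEuclideanCLM (𝕜 := ℝ) A - toEuclideanCLM (𝕜 := ℝ) C‖
          ≤ ‖s • toEuclideanCLM (𝕜 := ℝ) A‖ + ‖toEuclideanCLM (𝕜 := ℝ) C‖ := norm_sub_le _ _
        _ = |s| * ‖toEuclideanCLM (𝕜 := ℝ) A‖ + ‖toEuclideanCLM (𝕜 := ℝ) C‖ := by
            rw [norm_smul s (toEuclideanCLM (𝕜 := ℝ) A), Real.norm_eq_abs]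
    haveI : Nonempty (Fin k) := ⟨⟨0, hk⟩⟩
    have hone : specNorm (1 : Matrix (Fin k) (Fin k) ℝ) = 1 := by
      rw [specNorm_eq_opNorm hk, _root_.map_one, norm_one]
    -- the invertibility/bound step
    have step : ∀ T : Matrix (Fin k) (Fin k) ℝ, specNorm T ≤ 1/2 + c * Δ →
        IsUnit ((1 : Matrix (Fin k) (Fin k) ℝ) - T) ∧
          specNorm ((1 : Matrix (Fin k) (Fin k) ℝ) - T)⁻¹ ≤ B := by
      intro T hT
      have h1 : specNorm T < 1 := lt_of_le_of_lt hT (by linarith)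
      obtain ⟨hU, hb⟩ := matrix_one_sub_inv hk T h1
      refine ⟨hU, hb.trans ?_⟩
      rw [hB2]
      exact inv_anti₀ hBpos (by linarith)
    -- matrix identities
    have id0 : (1/2 : ℝ) • (1 : Matrix (Fin k) (Fin k) ℝ) + E 0
        = 1 - ((1/2 : ℝ) • (1 : Matrix (Fin k) (Fin k) ℝ) - E 0) := by
      have hhalf : (1 : Matrix (Fin k) (Fin k) ℝ) - (1/2 : ℝ) • 1 = (1/2 : ℝ) • 1 := by
        calc (1 : Matrix (Fin k) (Fin k) ℝ) - (1/2 : ℝ) • 1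
            = (1:ℝ) • (1 : Matrix (Fin k) (Fin k) ℝ) - (1/2 : ℝ) • 1 := by rw [one_smul]
          _ = ((1:ℝ) - 1/2) • (1 : Matrix (Fin k) (Fin k) ℝ) := (sub_smul _ _ _).symm
          _ = (1/2 : ℝ) • 1 := by norm_num
      calc (1/2 : ℝ) • (1 : Matrix (Fin k) (Fin k) ℝ) + E 0
          = ((1 : Matrix (Fin k) (Fin k) ℝ) - (1/2 : ℝ) • 1) + E 0 := by rw [hhalf]
        _ = 1 - ((1/2 : ℝ) • (1 : Matrix (Fin k) (Fin k) ℝ) - E 0) := by abel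
    have idrec : ∀ t, (1 : Matrix (Fin k) (Fin k) ℝ) - a • G' t + E (t + 1)
        = 1 - (a • G' t - E (t + 1)) := by intro t; abel
    -- bound on T0
    have hT0 : specNorm ((1/2 : ℝ) • (1 : Matrix (Fin k) (Fin k) ℝ) - E 0) ≤ 1/2 + c * Δ := by
      calc specNorm ((1/2 : ℝ) • (1 : Matrix (Fin k) (Fin k) ℝ) - E 0)
          ≤ |1/2| * specNorm (1 : Matrix (Fin k) (Fin k) ℝ) + specNorm (E 0) := tri _ _ _
        _ ≤ 1/2 + c * Δ := by rw [hone]; have := hE 0; rw [abs_of_pos (by norm_num)]; linarith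
    -- main bound by induction
    have main : ∀ t, specNorm (G t) ≤ B := by
      intro t
      induction t with
      | zero =>
        rw [hG0, id0]
        exact (step _ hT0).2
      | succ t ih =>
        rw [hGrec t, idrec t]
        refine (step _ ?_).2
        calc specNorm (a • G' t - E (t + 1))
            ≤ |a| * specNorm (G' t) + specNorm (E (t + 1)) := tri _ _ _
          _ ≤ 1/2 + c * Δ := by
              have h1 := hG' t
              have h2 := hE (t + 1)
              have h3 : a * specNorm (G' t) ≤ a * B := by
                apply mul_le_mul_of_nonneg_left (h1.trans ih) ha0
              rw [abs_of_nonneg ha0]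
              linarith
    refine ⟨?_, ?_, main⟩
    · rw [id0]
      exact (step _ hT0).1
    · intro t
      rw [idrec t]
      refine (step _ ?_).1
      calc specNorm (a • G' t - E (t + 1))
          ≤ |a| * specNorm (G' t) + specNorm (E (t + 1)) := tri _ _ _
        _ ≤ 1/2 + c * Δ := by
            have h1 := hG' t
            have h2 := hE (t + 1)
            have h3 : a * specNorm (G' t) ≤ a * B := by
              apply mul_le_mul_of_nonneg_left (h1.trans (main t)) ha0
            rw [abs_of_nonneg ha0]
            linarith
end

section
/- Let c ∈ (0,1/2), β, λ > 0 with 4β/λ² = (1−Δ)² for some Δ ∈ (0,1], and define the scalar sequence m_0 = 1/(1/2 − cΔ), m_{t+1} = 1/((1 − cΔ) − (β/λ²)·m_t). Then for all t ≥ 0, m_t = y_t / y_{t+1} where y_t = κ₊ r₊^t + κ₋ r₋^t with r_± = ((1−cΔ) ± √((1−cΔ)² − 4β/λ²))/2, κ_± = (1 ∓ cΔ/√((1−cΔ)² − 4β/λ²))/2, and 0 < m_t ≤ 1/(1/2 − cΔ) for all t. -/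
set_option maxHeartbeats 1600000


/-- the Riccati sequence m_0 = 1/(1/2 − cΔ),
m_{t+1} = 1/((1−cΔ) − (β/λ²)m_t) satisfies m_t = y_t/y_{t+1} with
y_t = κ₊r₊^t + κ₋r₋^t, and 0 < m_t ≤ 1/(1/2 − cΔ). -/
theorem stmt8 (c Δ β lam : ℝ) (hc : c ∈ Set.Ioo (0:ℝ) (1/2))
    (hΔ : Δ ∈ Set.Ioc (0:ℝ) 1) (hβ : 0 < β) (hlam : 0 < lam)
    (hrel : 2 * Real.sqrt β = (1 - Δ) * lam)
    (m : ℕ → ℝ) (hm0 : m 0 = 1 / (1/2 - c * Δ))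
    (hmrec : ∀ t, m (t + 1) = 1 / ((1 - c * Δ) - (β / lam ^ 2) * m t)) :
    let s := Real.sqrt ((1 - c * Δ) ^ 2 - 4 * β / lam ^ 2)
    let rP := ((1 - c * Δ) + s) / 2
    let rM := ((1 - c * Δ) - s) / 2
    let κP := (1 - c * Δ / s) / 2
    let κM := (1 + c * Δ / s) / 2
    ∀ t : ℕ,
      m t = (κP * rP ^ t + κM * rM ^ t) / (κP * rP ^ (t+1) + κM * rM ^ (t+1)) ∧
      0 < m t ∧ m t ≤ 1 / (1/2 - c * Δ) := by
  obtain ⟨hc0, hc1⟩ := hc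
  obtain ⟨hΔ0, hΔ1⟩ := hΔ
  intro s rP rM κP κM
  have hsdef : s = Real.sqrt ((1 - c * Δ) ^ 2 - 4 * β / lam ^ 2) := rfl
  have hrPdef : rP = ((1 - c * Δ) + s) / 2 := rfl
  have hrMdef : rM = ((1 - c * Δ) - s) / 2 := rfl
  have hκPdef : κP = (1 - c * Δ / s) / 2 := rfl
  have hκMdef : κM = (1 + c * Δ / s) / 2 := rfl
  clear_value s rP rM κP κM
  set a : ℝ := c * Δ with ha_def
  have ha0 : 0 < a := by rw [ha_def]; positivity
  have haΔ : a < Δ := by rw [ha_def]; nlinarith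
  have hahalf : a < 1/2 := by rw [ha_def]; nlinarith
  clear_value a
  have hsqβ : Real.sqrt β = (1 - Δ) * lam / 2 := by linarith
  have hβeq : β = (1 - Δ)^2 * lam^2 / 4 := by
    rw [← Real.sq_sqrt hβ.le, hsqβ]; ring
  have hB : β / lam^2 = (1 - Δ)^2 / 4 := by
    rw [hβeq]; field_simp
  have hB4 : 4 * β / lam^2 = (1 - Δ)^2 := by
    rw [mul_div_assoc, hB]; ring
  have hΔ1' : (0:ℝ) ≤ 1 - Δ := by linarith
  have hargpos : 0 < (1 - a)^2 - 4 * β / lam^2 := by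
    rw [hB4]; nlinarith
  have hs2 : s^2 = (1 - a)^2 - (1 - Δ)^2 := by
    rw [hsdef, Real.sq_sqrt hargpos.le]; linarith [hB4]
  have hs : 0 < s := by rw [hsdef]; exact Real.sqrt_pos.mpr hargpos
  have hsne : s ≠ 0 := hs.ne'
  -- the explicit solution
  set y : ℕ → ℝ := fun t => κP * rP ^ t + κM * rM ^ t with hy_def
  have hy0 : y 0 = 1 := by
    simp only [hy_def, pow_zero, hκPdef, hκMdef, mul_one]; ring
  have hy1 : y 1 = 1/2 - a := by
    simp only [hy_def, pow_one, hκPdef, hκMdef, hrPdef, hrMdef]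
    field_simp; ring
  have hrootP : rP^2 = (1 - a) * rP - β / lam^2 := by
    rw [hrPdef, hB]; linear_combination hs2 / 4
  have hrootM : rM^2 = (1 - a) * rM - β / lam^2 := by
    rw [hrMdef, hB]; linear_combination hs2 / 4
  have hyrec : ∀ t, y (t + 2) = (1 - a) * y (t + 1) - (β / lam^2) * y t := by
    intro t
    simp only [hy_def]
    have e1 : rP ^ (t+2) = rP ^ t * rP ^ 2 := by ring
    have e2 : rM ^ (t+2) = rM ^ t * rM ^ 2 := by ring
    rw [e1, e2, hrootP, hrootM]; ring
  have hyapp : ∀ t : ℕ, κP * rP ^ t + κM * rM ^ t = y t := fun t => rfl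
  clear_value y
  have hhalf : (0:ℝ) < 1/2 - a := by linarith
  -- key inequality: (1-Δ)^2 ≤ 2*(1/2 - a)
  have hkey : (1 - Δ)^2 ≤ 2 * (1/2 - a) := by nlinarith [haΔ]
  have key : ∀ t, m t = y t / y (t + 1) ∧ 0 < y t ∧ (1/2 - a) * y t ≤ y (t + 1) := by
    intro t
    induction t with
    | zero =>
      refine ⟨?_, by rw [hy0]; norm_num, by rw [hy0, hy1]; linarith⟩
      rw [hm0, hy0, hy1]
    | succ n ih =>
      obtain ⟨hmn, hyn, hrat⟩ := ih
      have hyn1 : 0 < y (n + 1) := lt_of_lt_of_le (by positivity) hrat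
      have hy2eq := hyrec n
      have hstep : (1/2 - a) * y (n + 1) ≤ y (n + 2) := by
        rw [hy2eq, hB]
        nlinarith [mul_le_mul_of_nonneg_left hrat (by linarith : (0:ℝ) ≤ 1/2),
          mul_le_mul_of_nonneg_right hkey hyn.le]
      have hyn2 : 0 < y (n + 2) := lt_of_lt_of_le (by positivity) hstep
      refine ⟨?_, hyn1, hstep⟩
      rw [hmrec n, hmn]
      have hden : (1 - a) - β / lam^2 * (y n / y (n+1)) = y (n + 2) / y (n + 1) := by
        rw [hy2eq]; field_simp
      rw [hden, one_div_div]
  intro t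
  obtain ⟨hmt, hyt, hrat⟩ := key t
  have hyt1 : 0 < y (t + 1) := lt_of_lt_of_le (by positivity) hrat
  rw [hyapp t, hyapp (t+1)]
  refine ⟨hmt, ?_, ?_⟩
  · rw [hmt]; positivity
  · rw [hmt, div_le_div_iff₀ hyt1 hhalf]
    linarith [hrat]
end

section
/- Let λ > 2√β > 0, c = 1/32, Δ = 1 − 2√β/λ, and λ⁺ = (λ + √(λ² − 4β))/2. Define r₊ := ((1−cΔ) + √((1−cΔ)² − 4β/λ²))/2. Then λ·r₊ ≥ (1−c)·λ⁺ + c·√β. -/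
/-- with λ > 2√β > 0, c = 1/32, Δ = 1 − 2√β/λ,
λ⁺ = (λ + √(λ² − 4β))/2 and r₊ := ((1−cΔ) + √((1−cΔ)² − 4β/λ²))/2,
one has λ·r₊ ≥ (1−c)·λ⁺ + c·√β. -/
theorem stmt10 (β lam c Δ lamPlus rPlus : ℝ)
    (hβ : 0 < Real.sqrt β) (hlam : 2 * Real.sqrt β < lam)
    (hc : c = 1/32) (hΔ : Δ = 1 - 2 * Real.sqrt β / lam)
    (hlamPlus : lamPlus = (lam + Real.sqrt (lam ^ 2 - 4 * β)) / 2)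
    (hrPlus : rPlus =
      ((1 - c * Δ) + Real.sqrt ((1 - c * Δ) ^ 2 - 4 * β / lam ^ 2)) / 2) :
    (1 - c) * lamPlus + c * Real.sqrt β ≤ lam * rPlus := by
  have hβpos : 0 < β := Real.sqrt_pos.mp hβ
  have hs2 : Real.sqrt β ^ 2 = β := Real.sq_sqrt hβpos.le
  set s := Real.sqrt β with hs
  have hlam0 : 0 < lam := lt_trans (by positivity) hlam
  set u : ℝ := (1 - c) * lam + 2 * c * s with hu
  have h1 : lam * (1 - c * Δ) = u := by
    rw [hΔ]; field_simp [hu]; ring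
  have h2 : lam ^ 2 * ((1 - c * Δ) ^ 2 - 4 * β / lam ^ 2) = u ^ 2 - 4 * β := by
    have : (lam * (1 - c * Δ)) ^ 2 = u ^ 2 := by rw [h1]
    field_simp at this ⊢
    nlinarith [this]
  have h3 : lam * Real.sqrt ((1 - c * Δ) ^ 2 - 4 * β / lam ^ 2)
      = Real.sqrt (u ^ 2 - 4 * β) := by
    rw [← h2, Real.sqrt_mul (by positivity), Real.sqrt_sq hlam0.le]
  have hkey : (1 - c) * Real.sqrt (lam ^ 2 - 4 * β) ≤ Real.sqrt (u ^ 2 - 4 * β) := by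
    have hc1 : (0:ℝ) ≤ 1 - c := by rw [hc]; norm_num
    have : (1 - c) * Real.sqrt (lam ^ 2 - 4 * β)
        = Real.sqrt ((1 - c) ^ 2 * (lam ^ 2 - 4 * β)) := by
      rw [Real.sqrt_mul (by positivity), Real.sqrt_sq hc1]
    rw [this]
    apply Real.sqrt_le_sqrt
    rw [← hs2, hu, hc]
    nlinarith [mul_pos (sub_pos.mpr hlam) hβ]
  have hexp : lam * rPlus = (u + Real.sqrt (u ^ 2 - 4 * β)) / 2 := by
    rw [hrPlus, show lam * ((1 - c * Δ + Real.sqrt ((1 - c * Δ) ^ 2 - 4 * β / lam ^ 2)) / 2)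
      = (lam * (1 - c * Δ) + lam * Real.sqrt ((1 - c * Δ) ^ 2 - 4 * β / lam ^ 2)) / 2
      from by ring, h1, h3]
  rw [hexp, hlamPlus]
  nlinarith [hkey]
end

section
/- Let λ > 2√β > 0 and set λ^± = (λ ± √(λ²−4β))/2. For the noiseless momentum power iteration on the diagonal matrix A = diag(λ,…,λ, 2√β,…,2√β) (λ repeated k times), starting from X₀ ∈ St(d,k) with cos θ_k(U_k, X₀) > 0, one has for all t ≥ 0: tan θ_k(U_k, X_t) = (2(√β)^t / ((λ⁺)^t + (λ⁻)^t)) · tan θ_k(U_k, X₀) ≥ (√β/λ⁺)^t · tan θ_k(U_k, X₀). -/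
open Matrix

/-- The matrix whose columns are the first k standard basis vectors of ℝ^d. -/
def topBasis (d k : ℕ) : Matrix (Fin d) (Fin k) ℝ :=
  Matrix.of fun i j => if (i : ℕ) = (j : ℕ) then 1 else 0

/-- The matrix whose columns are the last d−k standard basis vectors of ℝ^d. -/
def botBasis (d k : ℕ) : Matrix (Fin d) (Fin (d - k)) ℝ :=
  Matrix.of fun i j => if (i : ℕ) = (j : ℕ) + k then 1 else 0

/-- tan of the largest principal angle between range(U_k) and range(M):
tan θ_k(U_k, M) = ‖(U_{−k}ᵀ M)(U_kᵀ M)⁻¹‖₂. -/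
noncomputable def tanThetaK (d k : ℕ) (M : Matrix (Fin d) (Fin k) ℝ) : ℝ :=
  specNorm (((botBasis d k)ᵀ * M) * ((topBasis d k)ᵀ * M)⁻¹)

section MyAux

lemma sSup_mul_image' {c : ℝ} (hc : 0 < c) (S : Set ℝ) :
    sSup ((fun x => c * x) '' S) = c * sSup S := by
  rcases S.eq_empty_or_nonempty with h | h
  · simp [h]
  by_cases hb : BddAbove S
  · refine le_antisymm (csSup_le (h.image _) ?_) ?_
    · rintro x ⟨y, hy, rfl⟩
      exact mul_le_mul_of_nonneg_left (le_csSup hb hy) hc.le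
    · rw [mul_comm, ← le_div_iff₀ hc]
      refine csSup_le h fun y hy => ?_
      rw [le_div_iff₀ hc]
      have hmem : c * y ∈ (fun x => c * x) '' S := ⟨y, hy, rfl⟩
      calc y * c = c * y := mul_comm _ _
        _ ≤ sSup _ := le_csSup ?_ hmem
      obtain ⟨M, hM⟩ := hb
      exact ⟨c * M, by rintro x ⟨z, hz, rfl⟩; exact mul_le_mul_of_nonneg_left (hM hz) hc.le⟩
  · have hb' : ¬ BddAbove ((fun x => c * x) '' S) := by
      intro ⟨M, hM⟩
      exact hb ⟨M / c, fun y hy => (le_div_iff₀' hc).2 (hM ⟨y, hy, rfl⟩)⟩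
    rw [Real.sSup_of_not_bddAbove hb, Real.sSup_of_not_bddAbove hb', mul_zero]

lemma specNorm_nonneg' {m n : ℕ} (M : Matrix (Fin m) (Fin n) ℝ) : 0 ≤ specNorm M := by
  apply Real.sSup_nonneg
  rintro x ⟨v, hv, rfl⟩
  exact norm_nonneg _

lemma specNorm_smul' {m n : ℕ} (M : Matrix (Fin m) (Fin n) ℝ) {c : ℝ} (hc : 0 < c) :
    specNorm (c • M) = c * specNorm M := by
  rw [specNorm, specNorm, ← sSup_mul_image' hc]
  congr 1
  ext r
  constructor
  · rintro ⟨v, hv, rfl⟩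
    refine ⟨‖(WithLp.equiv 2 (Fin m → ℝ)).symm (M.mulVec (WithLp.equiv 2 (Fin n → ℝ) v))‖,
      ⟨v, hv, rfl⟩, ?_⟩
    rw [Matrix.smul_mulVec]
    simp [norm_smul, abs_of_pos hc]
  · rintro ⟨r, ⟨v, hv, rfl⟩, rfl⟩
    refine ⟨v, hv, ?_⟩
    rw [Matrix.smul_mulVec]
    simp [norm_smul, abs_of_pos hc]

lemma isUnit_of_sigmaMin_pos' {n : ℕ} (M : Matrix (Fin n) (Fin n) ℝ)
    (h : 0 < sigmaMin M) : IsUnit M := by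
  rw [Matrix.isUnit_iff_isUnit_det, isUnit_iff_ne_zero]
  intro hdet
  obtain ⟨v, hv, hMv⟩ := Matrix.exists_mulVec_eq_zero_iff.2 hdet
  set ev : EuclideanSpace ℝ (Fin n) := (WithLp.equiv 2 (Fin n → ℝ)).symm v
  have hev : ev ≠ 0 := by simpa [ev] using hv
  have hne : ‖ev‖ ≠ 0 := norm_ne_zero_iff.2 hev
  have hmem : (0:ℝ) ∈ {r | ∃ v : EuclideanSpace ℝ (Fin n), ‖v‖ = 1 ∧
      r = ‖(WithLp.equiv 2 (Fin n → ℝ)).symm (M.mulVec (WithLp.equiv 2 (Fin n → ℝ) v))‖} := by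
    refine ⟨‖ev‖⁻¹ • ev, ?_, ?_⟩
    · rw [norm_smul, norm_inv, norm_norm, inv_mul_cancel₀ hne]
    · have h2 : (WithLp.equiv 2 (Fin n → ℝ)) (‖ev‖⁻¹ • ev) = ‖ev‖⁻¹ • v := by simp [ev]
      rw [h2, Matrix.mulVec_smul, hMv, smul_zero]
      simp
  have hbdd : BddBelow {r | ∃ v : EuclideanSpace ℝ (Fin n), ‖v‖ = 1 ∧
      r = ‖(WithLp.equiv 2 (Fin n → ℝ)).symm (M.mulVec (WithLp.equiv 2 (Fin n → ℝ) v))‖} :=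
    ⟨0, by rintro x ⟨v, hv, rfl⟩; exact norm_nonneg _⟩
  have hle := csInf_le hbdd hmem
  rw [sigmaMin] at h
  linarith

lemma top_mul_apply' {d k n : ℕ} (hkd : k ≤ d) (N : Matrix (Fin d) (Fin n) ℝ)
    (j : Fin k) (c : Fin n) :
    ((topBasis d k)ᵀ * N) j c = N ⟨j, lt_of_lt_of_le j.2 hkd⟩ c := by
  rw [Matrix.mul_apply, Finset.sum_eq_single (⟨j, lt_of_lt_of_le j.2 hkd⟩ : Fin d)]
  · simp [topBasis]
  · intro b _ hb
    have hne : (b : ℕ) ≠ (j : ℕ) := fun h => hb (Fin.ext h)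
    simp [topBasis, hne]
  · simp

lemma bot_mul_apply' {d k n : ℕ} (N : Matrix (Fin d) (Fin n) ℝ)
    (j : Fin (d - k)) (c : Fin n) :
    ((botBasis d k)ᵀ * N) j c = N ⟨(j : ℕ) + k, by omega⟩ c := by
  rw [Matrix.mul_apply, Finset.sum_eq_single (⟨(j : ℕ) + k, by omega⟩ : Fin d)]
  · simp [botBasis]
  · intro b _ hb
    have hne : (b : ℕ) ≠ (j : ℕ) + k := fun h => hb (Fin.ext h)
    simp [botBasis, hne]
  · simp

end MyAux

/-- noiseless momentum power iteration on
A = diag(λ,…,λ,2√β,…,2√β) (λ repeated k times), λ > 2√β > 0: the iterates X_t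
(Q-factors of Z_t = p_t(A)X₀ for invertible upper-triangular R_t) satisfy
tan θ_k(U_k, X_t) = (2(√β)^t/((λ⁺)^t + (λ⁻)^t))·tan θ_k(U_k, X₀)
≥ (√β/λ⁺)^t·tan θ_k(U_k, X₀), where λ^± = (λ ± √(λ²−4β))/2. -/
theorem stmt13 (d k : ℕ) (hk : 0 < k) (hkd : k ≤ d)
    (β lam : ℝ) (hβ : 0 < Real.sqrt β) (hlam : 2 * Real.sqrt β < lam)
    (p : ℕ → ℝ → ℝ) (hp0 : ∀ x, p 0 x = 1) (hp1 : ∀ x, p 1 x = x / 2)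
    (hprec : ∀ t x, p (t + 2) x = x * p (t + 1) x - β * p t x)
    (X : ℕ → Matrix (Fin d) (Fin k) ℝ) (R : ℕ → Matrix (Fin k) (Fin k) ℝ)
    (horth : ∀ t, (X t)ᵀ * X t = 1)
    (hRunit : ∀ t, IsUnit (R t))
    (hRtri : ∀ t, (R t).BlockTriangular id)
    (hfac : ∀ t,
      Matrix.diagonal (fun i : Fin d =>
          p t (if (i : ℕ) < k then lam else 2 * Real.sqrt β)) * X 0
        = X t * R t)
    (hcos : 0 < sigmaMin ((topBasis d k)ᵀ * X 0)) :
    ∀ t : ℕ,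
      tanThetaK d k (X t)
          = (2 * Real.sqrt β ^ t
              / (((lam + Real.sqrt (lam ^ 2 - 4 * β)) / 2) ^ t
                + ((lam - Real.sqrt (lam ^ 2 - 4 * β)) / 2) ^ t))
            * tanThetaK d k (X 0) ∧
      (Real.sqrt β / ((lam + Real.sqrt (lam ^ 2 - 4 * β)) / 2)) ^ t
          * tanThetaK d k (X 0)
        ≤ tanThetaK d k (X t) := by
  have hβpos : 0 < β := Real.sqrt_pos.1 hβ
  set sb := Real.sqrt β with hsb
  set s := Real.sqrt (lam ^ 2 - 4 * β) with hs
  set lp := (lam + s) / 2 with hlp_def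
  set lm := (lam - s) / 2 with hlm_def
  have hsb2 : sb ^ 2 = β := Real.sq_sqrt hβpos.le
  have hlam0 : 0 < lam := lt_trans (by positivity) hlam
  have hdisc : 0 ≤ lam ^ 2 - 4 * β := by nlinarith [hβ, hlam]
  have hs2 : s ^ 2 = lam ^ 2 - 4 * β := Real.sq_sqrt hdisc
  have hs0 : 0 ≤ s := Real.sqrt_nonneg _
  have hslt : s < lam := by
    nlinarith [hs2, hs0, hβpos]
  have hlm0 : 0 < lm := by rw [hlm_def]; linarith
  have hlp0 : 0 < lp := by rw [hlp_def]; linarith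
  have hlmle : lm ≤ lp := by rw [hlm_def, hlp_def]; linarith
  have hsum : lp + lm = lam := by rw [hlp_def, hlm_def]; ring
  have hprod : lp * lm = β := by
    rw [hlp_def, hlm_def]
    nlinarith [hs2]
  -- closed form for p at lam
  have hplam : ∀ t, p t lam = (lp ^ t + lm ^ t) / 2 := by
    have H : ∀ t, p t lam = (lp ^ t + lm ^ t) / 2 ∧
        p (t + 1) lam = (lp ^ (t + 1) + lm ^ (t + 1)) / 2 := by
      intro t
      induction t with
      | zero =>
        refine ⟨by simp [hp0], ?_⟩
        rw [hp1]
        rw [pow_one, pow_one, ← hsum]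
      | succ n ih =>
        refine ⟨ih.2, ?_⟩
        have := hprec n lam
        rw [show n + 2 = n + 1 + 1 from rfl] at this
        rw [this, ih.1, ih.2, ← hsum, ← hprod]
        ring
    exact fun t => (H t).1
  -- closed form for p at 2√β
  have hpsb : ∀ t, p t (2 * sb) = sb ^ t := by
    have H : ∀ t, p t (2 * sb) = sb ^ t ∧ p (t + 1) (2 * sb) = sb ^ (t + 1) := by
      intro t
      induction t with
      | zero => exact ⟨by simp [hp0], by rw [hp1]; ring⟩
      | succ n ih =>
        refine ⟨ih.2, ?_⟩
        have := hprec n (2 * sb)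
        rw [show n + 2 = n + 1 + 1 from rfl] at this
        rw [this, ih.1, ih.2, ← hsb2]
        ring
    exact fun t => (H t).1
  have hplam_pos : ∀ t, 0 < p t lam := by
    intro t
    rw [hplam t]
    positivity
  have hpsb_pos : ∀ t, 0 < p t (2 * sb) := by
    intro t
    rw [hpsb t]
    positivity
  -- matrix setup
  set A : ℕ → Matrix (Fin k) (Fin k) ℝ := fun t => (topBasis d k)ᵀ * X t with hA_def
  set B : ℕ → Matrix (Fin (d - k)) (Fin k) ℝ := fun t => (botBasis d k)ᵀ * X t with hB_def
  have hA0 : IsUnit (A 0) := isUnit_of_sigmaMin_pos' _ hcos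
  have hA0det : IsUnit (A 0).det := (Matrix.isUnit_iff_isUnit_det _).1 hA0
  have hRdet : ∀ t, IsUnit (R t).det := fun t => (Matrix.isUnit_iff_isUnit_det _).1 (hRunit t)
  have hAt : ∀ t, A t * R t = p t lam • A 0 := by
    intro t
    ext j c
    have h1 : (A t * R t) j c = ((topBasis d k)ᵀ * (X t * R t)) j c := by
      rw [hA_def, Matrix.mul_assoc]
    rw [h1, ← hfac t, top_mul_apply' hkd, Matrix.diagonal_mul]
    have hjk : ((⟨(j : ℕ), lt_of_lt_of_le j.2 hkd⟩ : Fin d) : ℕ) < k := j.2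
    rw [if_pos hjk]
    simp only [Matrix.smul_apply, smul_eq_mul, hA_def]
    rw [top_mul_apply' hkd]
  have hBt : ∀ t, B t * R t = p t (2 * sb) • B 0 := by
    intro t
    ext j c
    have h1 : (B t * R t) j c = ((botBasis d k)ᵀ * (X t * R t)) j c := by
      rw [hB_def, Matrix.mul_assoc]
    rw [h1, ← hfac t, bot_mul_apply', Matrix.diagonal_mul]
    have hjk : ¬ ((⟨(j : ℕ) + k, by omega⟩ : Fin d) : ℕ) < k := by simp
    rw [if_neg hjk]
    simp only [Matrix.smul_apply, smul_eq_mul, hB_def]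
    rw [bot_mul_apply']
  have hAt' : ∀ t, A t = (p t lam • A 0) * (R t)⁻¹ := by
    intro t
    rw [← hAt t, Matrix.mul_assoc, Matrix.mul_nonsing_inv _ (hRdet t), Matrix.mul_one]
  have hBt' : ∀ t, B t = (p t (2 * sb) • B 0) * (R t)⁻¹ := by
    intro t
    rw [← hBt t, Matrix.mul_assoc, Matrix.mul_nonsing_inv _ (hRdet t), Matrix.mul_one]
  have hAtinv : ∀ t, (A t)⁻¹ = R t * ((p t lam)⁻¹ • (A 0)⁻¹) := by
    intro t
    apply Matrix.inv_eq_right_inv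
    rw [hAt' t, Matrix.mul_assoc, ← Matrix.mul_assoc (R t)⁻¹,
      Matrix.nonsing_inv_mul _ (hRdet t), Matrix.one_mul,
      Matrix.smul_mul, Matrix.mul_smul, smul_smul,
      Matrix.mul_nonsing_inv _ hA0det,
      mul_inv_cancel₀ (hplam_pos t).ne', one_smul]
  have hkey : ∀ t, B t * (A t)⁻¹ = (p t (2 * sb) / p t lam) • (B 0 * (A 0)⁻¹) := by
    intro t
    rw [hBt' t, hAtinv t, Matrix.mul_assoc, ← Matrix.mul_assoc (R t)⁻¹,
      Matrix.nonsing_inv_mul _ (hRdet t), Matrix.one_mul,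
      Matrix.smul_mul, Matrix.mul_smul, smul_smul, div_eq_mul_inv, Matrix.mul_assoc]
  have htTK : ∀ t, tanThetaK d k (X t)
      = (p t (2 * sb) / p t lam) * tanThetaK d k (X 0) := by
    intro t
    have hq : 0 < p t (2 * sb) / p t lam := div_pos (hpsb_pos t) (hplam_pos t)
    calc tanThetaK d k (X t) = specNorm (B t * (A t)⁻¹) := rfl
      _ = specNorm ((p t (2 * sb) / p t lam) • (B 0 * (A 0)⁻¹)) := by rw [hkey t]
      _ = (p t (2 * sb) / p t lam) * specNorm (B 0 * (A 0)⁻¹) := specNorm_smul' _ hq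
      _ = (p t (2 * sb) / p t lam) * tanThetaK d k (X 0) := rfl
  have hT0 : 0 ≤ tanThetaK d k (X 0) := specNorm_nonneg' _
  intro t
  have heq : tanThetaK d k (X t)
      = (2 * sb ^ t / (lp ^ t + lm ^ t)) * tanThetaK d k (X 0) := by
    rw [htTK t, hpsb t, hplam t]
    congr 1
    rw [div_div_eq_mul_div]
    have h2 : (0:ℝ) < lp ^ t + lm ^ t := by positivity
    field_simp
  refine ⟨heq, ?_⟩
  rw [heq]
  apply mul_le_mul_of_nonneg_right _ hT0
  rw [div_pow, div_le_div_iff₀ (by positivity) (by positivity)]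
  have hple : lm ^ t ≤ lp ^ t := pow_le_pow_left₀ hlm0.le hlmle t
  have hsbt : (0:ℝ) ≤ sb ^ t := by positivity
  nlinarith [mul_le_mul_of_nonneg_left hple hsbt]
end

section
/- Let A = diag(λ, 2√β) ∈ ℝ^{2×2} with λ > 2√β > 0, and let v₁ be the first standard basis vector of ℝ². Consider the iteration y₁ = (1/2)A x₀ − (1/2)(λ−2√β)(v₁ᵀx₀)v₁, x₁ = y₁/‖y₁‖; and for t ≥ 1, y_{t+1} = A x_t − β x_{t−1}/‖y_t‖ − (λ−2√β)(v₁ᵀx_t)v₁, x_{t+1} = y_{t+1}/‖y_{t+1}‖, starting from a unit vector x₀ with v₁ᵀx₀ > 0. Then for all t ≥ 0, x_t ∈ span(x₀) and hence the angle between v₁ and x_t equals the angle between v₁ and x₀ for all t. -/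
open Matrix

/-- Euclidean norm on ℝ² (as `Fin 2 → ℝ`). -/
noncomputable def enorm2 (v : Fin 2 → ℝ) : ℝ := Real.sqrt (v 0 ^ 2 + v 1 ^ 2)

lemma enorm2_smul (c : ℝ) (hc : 0 ≤ c) (v : Fin 2 → ℝ) :
    enorm2 (c • v) = c * enorm2 v := by
  unfold enorm2
  have h : (c • v) 0 ^ 2 + (c • v) 1 ^ 2 = c ^ 2 * (v 0 ^ 2 + v 1 ^ 2) := by
    simp [Pi.smul_apply, smul_eq_mul]; ring
  rw [h, Real.sqrt_mul (sq_nonneg c), Real.sqrt_sq hc]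

/-- for A = diag(λ, 2√β) with λ > 2√β > 0 and the perturbed
momentum iteration y₁ = (1/2)Ax₀ − (1/2)(λ−2√β)(v₁ᵀx₀)v₁, x₁ = y₁/‖y₁‖,
y_{t+1} = Ax_t − βx_{t−1}/‖y_t‖ − (λ−2√β)(v₁ᵀx_t)v₁, x_{t+1} = y_{t+1}/‖y_{t+1}‖
(starting from a unit vector x₀ with v₁ᵀx₀ > 0), every iterate x_t lies in
span(x₀), and hence the (principal) angle between v₁ and x_t equals the angle
between v₁ and x₀, for all t. -/
theorem stmt15 (β lam : ℝ) (hβ : 0 < Real.sqrt β) (hlam : 2 * Real.sqrt β < lam)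
    (A : Matrix (Fin 2) (Fin 2) ℝ)
    (hA : A = Matrix.diagonal ![lam, 2 * Real.sqrt β])
    (v1 : Fin 2 → ℝ) (hv1 : v1 = ![1, 0])
    (x y : ℕ → Fin 2 → ℝ)
    (hx0 : enorm2 (x 0) = 1) (hx0pos : 0 < x 0 0)
    (hy1 : y 1 = (1/2 : ℝ) • A.mulVec (x 0)
      - ((1/2) * (lam - 2 * Real.sqrt β) * (x 0 0)) • v1)
    (hx1 : x 1 = (enorm2 (y 1))⁻¹ • y 1)
    (hyrec : ∀ t, 1 ≤ t → y (t + 1) = A.mulVec (x t)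
      - (β / enorm2 (y t)) • x (t - 1)
      - ((lam - 2 * Real.sqrt β) * (x t 0)) • v1)
    (hxrec : ∀ t, 1 ≤ t → x (t + 1) = (enorm2 (y (t + 1)))⁻¹ • y (t + 1)) :
    ∀ t : ℕ, (∃ c : ℝ, c ≠ 0 ∧ x t = c • x 0) ∧
      Real.arccos |x t 0| = Real.arccos |x 0 0| := by
  set s := Real.sqrt β with hs
  have hβpos : 0 < β := Real.sqrt_pos.mp hβ
  have hsq : s ^ 2 = β := Real.sq_sqrt hβpos.le
  have hdiv : β / s = s := by rw [← hsq, pow_two, mul_div_assoc, div_self hβ.ne', mul_one]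
  -- key identity: A x₀ − (λ−2s)(x₀ 0) v₁ = 2s • x₀
  have key : A.mulVec (x 0) - ((lam - 2 * s) * (x 0 0)) • v1 = (2 * s) • x 0 := by
    funext i
    fin_cases i <;>
      simp [hA, hv1, Matrix.mulVec, dotProduct, Fin.sum_univ_two,
        Matrix.diagonal, Pi.smul_apply, smul_eq_mul] <;> ring
  -- main invariant: for all t, y (t+1) = s • x₀ and x (t+1) = x₀
  have main : ∀ t : ℕ, y (t + 1) = s • x 0 ∧ x (t + 1) = x 0 := by
    intro t
    induction t using Nat.strong_induction_on with
    | _ t ih =>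
      match t with
      | 0 =>
        have hy : y 1 = s • x 0 := by
          rw [hy1]
          funext i
          fin_cases i <;>
            simp [hA, hv1, Matrix.mulVec, dotProduct, Fin.sum_univ_two,
              Matrix.diagonal, Pi.smul_apply, smul_eq_mul] <;> ring
        have hn : enorm2 (y 1) = s := by rw [hy, enorm2_smul s hβ.le, hx0, mul_one]
        have hx : x 1 = x 0 := by
          rw [hx1, hy, enorm2_smul s hβ.le, hx0, mul_one, smul_smul, inv_mul_cancel₀ hβ.ne', one_smul]
        exact ⟨hy, hx⟩
      | m + 1 =>
        obtain ⟨hym, hxm⟩ := ih m (by omega)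
        have hprev : x (m + 1 - 1) = x 0 := by
          match m with
          | 0 => rfl
          | k + 1 => exact (ih k (by omega)).2
        have hnorm : enorm2 (y (m + 1)) = s := by
          rw [hym, enorm2_smul s hβ.le, hx0, mul_one]
        have hy : y (m + 2) = s • x 0 := by
          rw [hyrec (m + 1) (by omega), hxm, hprev, hnorm, sub_right_comm, key, hdiv,
            ← sub_smul]
          congr 1
          ring
        have hn : enorm2 (y (m + 2)) = s := by rw [hy, enorm2_smul s hβ.le, hx0, mul_one]
        have hx : x (m + 2) = x 0 := by
          rw [hxrec (m + 1) (by omega), hy, enorm2_smul s hβ.le, hx0, mul_one, smul_smul, inv_mul_cancel₀ hβ.ne', one_smul]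
        exact ⟨hy, hx⟩
  intro t
  match t with
  | 0 => exact ⟨⟨1, one_ne_zero, (one_smul ℝ (x 0)).symm⟩, rfl⟩
  | n + 1 =>
    have hx : x (n + 1) = x 0 := (main n).2
    exact ⟨⟨1, one_ne_zero, by rw [hx, one_smul]⟩, by rw [hx]⟩
end

section
/- Let λ > 2√β > 0, c = 1/32 and Δ = 1 − 2√β/λ. Suppose U ∈ St(d,k), X ∈ St(d,k) with cos θ_k(U,X) > 0, G is a k×k matrix with ‖G‖₂ ≤ 1/(1/2 − c), and Y ∈ ℝ^{d×k} satisfies UᵀY = Λ G^{-1}(UᵀX) where Λ is a diagonal k×k matrix with all diagonal entries ≥ λ. Then the smallest singular value of Y satisfies σ_min(Y) ≥ λ·cos θ_k(U,X)·(1/2 − c) > 0; in particular Y has full column rank and its Moore–Penrose pseudoinverse satisfies ‖Y†‖₂ ≤ 1/(λ·cos θ_k(U,X)·(1/2 − c)). -/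
open Matrix

noncomputable def eN {n : ℕ} (v : Fin n → ℝ) : ℝ := ‖(WithLp.equiv 2 (Fin n → ℝ)).symm v‖

lemma eN_nonneg {n : ℕ} (v : Fin n → ℝ) : 0 ≤ eN v := norm_nonneg _

lemma inner_symm {n : ℕ} (u v : Fin n → ℝ) :
    (inner ℝ ((WithLp.equiv 2 (Fin n → ℝ)).symm u) ((WithLp.equiv 2 (Fin n → ℝ)).symm v) : ℝ) = u ⬝ᵥ v := by
  simp [PiLp.inner_apply, dotProduct, RCLike.inner_apply, WithLp.equiv_symm_apply, PiLp.toLp_apply, mul_comm]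

lemma eN_sq {n : ℕ} (v : Fin n → ℝ) : eN v ^ 2 = v ⬝ᵥ v := by
  rw [eN, ← inner_symm, real_inner_self_eq_norm_sq]

lemma dot_le_eN {n : ℕ} (u v : Fin n → ℝ) : u ⬝ᵥ v ≤ eN u * eN v := by
  rw [← inner_symm]; exact real_inner_le_norm _ _

lemma eN_smul {n : ℕ} (t : ℝ) (v : Fin n → ℝ) : eN (t • v) = |t| * eN v := by
  have h : (WithLp.equiv 2 (Fin n → ℝ)).symm (t • v) = t • (WithLp.equiv 2 (Fin n → ℝ)).symm v := rfl
  rw [eN, h, norm_smul, Real.norm_eq_abs, eN]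

lemma eN_eq_zero {n : ℕ} {v : Fin n → ℝ} (h : eN v = 0) : v = 0 := by
  have := norm_eq_zero.mp h
  have h2 : v = (WithLp.equiv 2 (Fin n → ℝ)) ((WithLp.equiv 2 (Fin n → ℝ)).symm v) := rfl
  rw [h2, this]; rfl

lemma eN_zero_eq {n : ℕ} : eN (0 : Fin n → ℝ) = 0 := by simp [eN]

-- set membership reformulation
lemma mem_set {m n : ℕ} (M : Matrix (Fin m) (Fin n) ℝ) (r : ℝ) :
    (r ∈ {r | ∃ v : EuclideanSpace ℝ (Fin n), ‖v‖ = 1 ∧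
      r = ‖(WithLp.equiv 2 (Fin m → ℝ)).symm (M.mulVec (WithLp.equiv 2 (Fin n → ℝ) v))‖})
    ↔ ∃ w : Fin n → ℝ, eN w = 1 ∧ r = eN (M.mulVec w) := by
  constructor
  · rintro ⟨v, hv, rfl⟩
    exact ⟨WithLp.equiv 2 (Fin n → ℝ) v, hv, rfl⟩
  · rintro ⟨w, hw, rfl⟩
    exact ⟨(WithLp.equiv 2 (Fin n → ℝ)).symm w, hw, rfl⟩

lemma sigmaMin_le {m n : ℕ} (M : Matrix (Fin m) (Fin n) ℝ) (w : Fin n → ℝ) (hw : eN w = 1) :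
    sigmaMin M ≤ eN (M.mulVec w) := by
  apply csInf_le
  · exact ⟨0, by rintro r ⟨v, hv, rfl⟩; exact norm_nonneg _⟩
  · exact (mem_set M _).mpr ⟨w, hw, rfl⟩

lemma le_sigmaMin {m n : ℕ} (h0 : 0 < n) (M : Matrix (Fin m) (Fin n) ℝ) (b : ℝ)
    (h : ∀ w : Fin n → ℝ, eN w = 1 → b ≤ eN (M.mulVec w)) : b ≤ sigmaMin M := by
  haveI : NeZero n := ⟨h0.ne'⟩
  apply le_csInf
  · exact ⟨_, ⟨EuclideanSpace.single (0 : Fin n) (1 : ℝ), by simp [EuclideanSpace.norm_single], rfl⟩⟩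
  · rintro r hr
    obtain ⟨w, hw, rfl⟩ := (mem_set M _).mp hr
    exact h w hw

lemma sigmaMin_mulVec {m n : ℕ} (M : Matrix (Fin m) (Fin n) ℝ) (v : Fin n → ℝ) :
    sigmaMin M * eN v ≤ eN (M.mulVec v) := by
  rcases eq_or_ne (eN v) 0 with h | h
  · rw [h, mul_zero]; exact eN_nonneg _
  · have hv : 0 < eN v := lt_of_le_of_ne (eN_nonneg v) (Ne.symm h)
    have hw : eN ((eN v)⁻¹ • v) = 1 := by
      rw [eN_smul, abs_of_pos (inv_pos.mpr hv), inv_mul_cancel₀ h]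
    have := sigmaMin_le M _ hw
    rw [Matrix.mulVec_smul, eN_smul, abs_of_pos (inv_pos.mpr hv)] at this
    calc sigmaMin M * eN v ≤ ((eN v)⁻¹ * eN (M.mulVec v)) * eN v := by
          exact mul_le_mul_of_nonneg_right this hv.le
    _ = eN (M.mulVec v) := by field_simp

lemma specNorm_bddAbove {m n : ℕ} (M : Matrix (Fin m) (Fin n) ℝ) :
    BddAbove {r | ∃ v : EuclideanSpace ℝ (Fin n), ‖v‖ = 1 ∧
      r = ‖(WithLp.equiv 2 (Fin m → ℝ)).symm (M.mulVec (WithLp.equiv 2 (Fin n → ℝ) v))‖} := by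
  refine ⟨‖(Matrix.toEuclideanLin M).toContinuousLinearMap‖, ?_⟩
  rintro r ⟨v, hv, rfl⟩
  have : (WithLp.equiv 2 (Fin m → ℝ)).symm (M.mulVec (WithLp.equiv 2 (Fin n → ℝ) v))
      = (Matrix.toEuclideanLin M).toContinuousLinearMap v := rfl
  rw [this]
  exact (Matrix.toEuclideanLin M).toContinuousLinearMap.unit_le_opNorm v hv.le

lemma le_specNorm {m n : ℕ} (M : Matrix (Fin m) (Fin n) ℝ) (w : Fin n → ℝ) (hw : eN w = 1) :
    eN (M.mulVec w) ≤ specNorm M :=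
  le_csSup (specNorm_bddAbove M) ((mem_set M _).mpr ⟨w, hw, rfl⟩)

lemma mulVec_le_specNorm {m n : ℕ} (M : Matrix (Fin m) (Fin n) ℝ) (v : Fin n → ℝ) :
    eN (M.mulVec v) ≤ specNorm M * eN v := by
  rcases eq_or_ne (eN v) 0 with h | h
  · rw [eN_eq_zero h, Matrix.mulVec_zero, eN_zero_eq, eN_zero_eq, mul_zero]
  · have hv : 0 < eN v := lt_of_le_of_ne (eN_nonneg v) (Ne.symm h)
    have hw : eN ((eN v)⁻¹ • v) = 1 := by
      rw [eN_smul, abs_of_pos (inv_pos.mpr hv), inv_mul_cancel₀ h]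
    have := le_specNorm M _ hw
    rw [Matrix.mulVec_smul, eN_smul, abs_of_pos (inv_pos.mpr hv)] at this
    calc eN (M.mulVec v) = ((eN v)⁻¹ * eN (M.mulVec v)) * eN v := by field_simp
    _ ≤ specNorm M * eN v := mul_le_mul_of_nonneg_right this hv.le

lemma dp_move {m n : ℕ} (A : Matrix (Fin m) (Fin n) ℝ) (x : Fin n → ℝ) (y : Fin m → ℝ) :
    (A *ᵥ x) ⬝ᵥ y = x ⬝ᵥ (Aᵀ *ᵥ y) := by
  rw [dotProduct_comm, dotProduct_mulVec, dotProduct_comm, ← vecMul_transpose, transpose_transpose]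

lemma eN_orth {d k : ℕ} (U : Matrix (Fin d) (Fin k) ℝ) (hU : Uᵀ * U = 1) (z : Fin k → ℝ) :
    eN (U *ᵥ z) = eN z := by
  have h2 : eN (U *ᵥ z) ^ 2 = eN z ^ 2 := by
    rw [eN_sq, eN_sq, dp_move, Matrix.mulVec_mulVec, hU, Matrix.one_mulVec]
  have h1 := eN_nonneg (U *ᵥ z); have h0 := eN_nonneg z
  nlinarith [h2, h1, h0]

lemma eN_contract {d k : ℕ} (U : Matrix (Fin d) (Fin k) ℝ) (hU : Uᵀ * U = 1) (w : Fin d → ℝ) :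
    eN (Uᵀ *ᵥ w) ≤ eN w := by
  have key : eN (Uᵀ *ᵥ w) ^ 2 ≤ eN w * eN (Uᵀ *ᵥ w) := by
    rw [eN_sq]
    have h1 : (Uᵀ *ᵥ w) ⬝ᵥ (Uᵀ *ᵥ w) = w ⬝ᵥ (U *ᵥ (Uᵀ *ᵥ w)) := by
      rw [dp_move, transpose_transpose]
    rw [h1]
    calc w ⬝ᵥ (U *ᵥ (Uᵀ *ᵥ w)) ≤ eN w * eN (U *ᵥ (Uᵀ *ᵥ w)) := dot_le_eN _ _
    _ = eN w * eN (Uᵀ *ᵥ w) := by rw [eN_orth U hU]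
  rcases eq_or_lt_of_le (eN_nonneg (Uᵀ *ᵥ w)) with h | h
  · rw [← h]; exact eN_nonneg w
  · nlinarith [key, h]

lemma eN_diag_ge {k : ℕ} (a : Fin k → ℝ) (lam : ℝ) (hlam : 0 ≤ lam) (ha : ∀ i, lam ≤ a i)
    (w : Fin k → ℝ) : lam * eN w ≤ eN ((Matrix.diagonal a) *ᵥ w) := by
  have hsq : (lam * eN w) ^ 2 ≤ eN ((Matrix.diagonal a) *ᵥ w) ^ 2 := by
    rw [mul_pow, eN_sq, eN_sq]
    have hd : (Matrix.diagonal a) *ᵥ w = fun i => a i * w i := by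
      funext i; simp [Matrix.mulVec_diagonal]
    rw [hd]
    simp only [dotProduct]
    rw [Finset.mul_sum]
    refine Finset.sum_le_sum fun i _ => ?_
    have := ha i
    nlinarith [sq_nonneg (w i), this, hlam, mul_le_mul this this hlam (hlam.trans this)]
  have h0 : 0 ≤ lam * eN w := mul_nonneg hlam (eN_nonneg w)
  nlinarith [hsq, h0, eN_nonneg ((Matrix.diagonal a) *ᵥ w)]

lemma eN_inv_lower {k : ℕ} (G : Matrix (Fin k) (Fin k) ℝ) (hGu : IsUnit G) (u : Fin k → ℝ) :
    eN u ≤ specNorm G * eN (G⁻¹ *ᵥ u) := by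
  have hdet : IsUnit G.det := (Matrix.isUnit_iff_isUnit_det G).mp hGu
  have h1 : G *ᵥ (G⁻¹ *ᵥ u) = u := by
    rw [Matrix.mulVec_mulVec, Matrix.mul_nonsing_inv G hdet, Matrix.one_mulVec]
  calc eN u = eN (G *ᵥ (G⁻¹ *ᵥ u)) := by rw [h1]
  _ ≤ specNorm G * eN (G⁻¹ *ᵥ u) := mulVec_le_specNorm G _

lemma specNorm_le_of {m n : ℕ} (h0 : 0 < n) (M : Matrix (Fin m) (Fin n) ℝ) (b : ℝ)
    (h : ∀ w : Fin n → ℝ, eN w = 1 → eN (M.mulVec w) ≤ b) : specNorm M ≤ b := by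
  haveI : NeZero n := ⟨h0.ne'⟩
  apply csSup_le
  · exact ⟨_, ⟨EuclideanSpace.single (0 : Fin n) (1 : ℝ), by simp [EuclideanSpace.norm_single], rfl⟩⟩
  · rintro r hr
    obtain ⟨w, hw, rfl⟩ := (mem_set M _).mp hr
    exact h w hw

/-- if UᵀY = ΛG⁻¹(UᵀX) with U, X column-orthonormal,
cos θ_k(U,X) = σ_min(UᵀX) > 0, ‖G‖₂ ≤ 1/(1/2 − c) (c = 1/32, G invertible)
and Λ diagonal with entries ≥ λ, then σ_min(Y) ≥ λ·cos θ_k(U,X)·(1/2 − c) > 0;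
in particular Y has full column rank and its Moore–Penrose pseudoinverse
(Y† = (YᵀY)⁻¹Yᵀ) satisfies ‖Y†‖₂ ≤ 1/(λ·cos θ_k(U,X)·(1/2 − c)). -/
theorem stmt19 (d k : ℕ) (β lam c : ℝ) (hc : c = 1/32)
    (hβ : 0 < Real.sqrt β) (hlam : 2 * Real.sqrt β < lam)
    (U X : Matrix (Fin d) (Fin k) ℝ) (hU : Uᵀ * U = 1) (hX : Xᵀ * X = 1)
    (hcos : 0 < sigmaMin (Uᵀ * X))
    (G : Matrix (Fin k) (Fin k) ℝ) (hGu : IsUnit G)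
    (hG : specNorm G ≤ 1 / (1/2 - c))
    (a : Fin k → ℝ) (ha : ∀ i, lam ≤ a i)
    (Y : Matrix (Fin d) (Fin k) ℝ)
    (hY : Uᵀ * Y = Matrix.diagonal a * G⁻¹ * (Uᵀ * X)) :
    lam * sigmaMin (Uᵀ * X) * (1/2 - c) ≤ sigmaMin Y ∧
      0 < sigmaMin Y ∧ Y.rank = k ∧
      specNorm ((Yᵀ * Y)⁻¹ * Yᵀ)
        ≤ 1 / (lam * sigmaMin (Uᵀ * X) * (1/2 - c)) := by
  set σ := sigmaMin (Uᵀ * X) with hσdef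
  have hlam0 : 0 < lam := lt_trans (by positivity) hlam
  have hchalf : (0:ℝ) < 1/2 - c := by rw [hc]; norm_num
  -- k is positive
  have hk : 0 < k := by
    by_contra hk0
    have hk0 : k = 0 := Nat.eq_zero_of_not_pos hk0
    subst hk0
    have hempty : {r | ∃ v : EuclideanSpace ℝ (Fin 0), ‖v‖ = 1 ∧
        r = ‖(WithLp.equiv 2 (Fin 0 → ℝ)).symm ((Uᵀ * X).mulVec (WithLp.equiv 2 (Fin 0 → ℝ) v))‖}
        = (∅ : Set ℝ) := by
      ext r; simp only [Set.mem_setOf_eq, Set.mem_empty_iff_false, iff_false]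
      rintro ⟨v, hv, -⟩
      have : v = 0 := Subsingleton.elim v 0
      rw [this, norm_zero] at hv; exact zero_ne_one hv
    rw [hσdef, sigmaMin, hempty, Real.sInf_empty] at hcos
    exact lt_irrefl 0 hcos
  -- d is positive
  have hd : 0 < d := by
    rcases Nat.eq_zero_or_pos d with hd0 | hd; swap
    · exact hd
    subst hd0
    exfalso
    have h1 := congrFun (congrFun hU ⟨0, hk⟩) ⟨0, hk⟩
    rw [Matrix.mul_apply, Matrix.one_apply_eq] at h1
    simp at h1
  -- main lower bound on sigmaMin Y
  have key : ∀ w : Fin k → ℝ, eN w = 1 → lam * σ * (1/2 - c) ≤ eN (Y.mulVec w) := by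
    intro w hw
    set u := (Uᵀ * X) *ᵥ w with hu
    set z := G⁻¹ *ᵥ u with hz
    have h1 : σ ≤ eN u := sigmaMin_le (Uᵀ * X) w hw
    have h2 : eN u ≤ specNorm G * eN z := eN_inv_lower G hGu u
    have h3 : (1/2 - c) * σ ≤ eN z := by
      have h4 : specNorm G * eN z ≤ (1 / (1/2 - c)) * eN z :=
        mul_le_mul_of_nonneg_right hG (eN_nonneg z)
      have h5 : σ ≤ (1 / (1/2 - c)) * eN z := le_trans h1 (le_trans h2 h4)
      have h6 := mul_le_mul_of_nonneg_left h5 hchalf.le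
      calc (1/2 - c) * σ ≤ (1/2 - c) * ((1 / (1/2 - c)) * eN z) := h6
      _ = eN z := by rw [← mul_assoc, mul_one_div, div_self hchalf.ne', one_mul]
    have h4 : lam * eN z ≤ eN ((Matrix.diagonal a) *ᵥ z) := eN_diag_ge a lam hlam0.le ha z
    have h5 : (Matrix.diagonal a) *ᵥ z = Uᵀ *ᵥ (Y *ᵥ w) := by
      rw [hz, hu, Matrix.mulVec_mulVec, Matrix.mulVec_mulVec, Matrix.mulVec_mulVec, hY]
    have h6 : eN (Uᵀ *ᵥ (Y *ᵥ w)) ≤ eN (Y *ᵥ w) := eN_contract U hU _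
    calc lam * σ * (1/2 - c) = lam * ((1/2 - c) * σ) := by ring
    _ ≤ lam * eN z := mul_le_mul_of_nonneg_left h3 hlam0.le
    _ ≤ eN ((Matrix.diagonal a) *ᵥ z) := h4
    _ = eN (Uᵀ *ᵥ (Y *ᵥ w)) := by rw [h5]
    _ ≤ eN (Y *ᵥ w) := h6
  have main1 : lam * σ * (1/2 - c) ≤ sigmaMin Y := le_sigmaMin hk Y _ key
  have pos : 0 < lam * σ * (1/2 - c) := mul_pos (mul_pos hlam0 hcos) hchalf
  have hσY : 0 < sigmaMin Y := lt_of_lt_of_le pos main1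
  -- Y has trivial kernel
  have hker : ∀ v : Fin k → ℝ, Y.mulVec v = 0 → v = 0 := by
    intro v hv
    have h1 : sigmaMin Y * eN v ≤ eN (Y.mulVec v) := sigmaMin_mulVec Y v
    rw [hv, eN_zero_eq] at h1
    have h2 : eN v ≤ 0 := by nlinarith [eN_nonneg v, hσY]
    exact eN_eq_zero (le_antisymm h2 (eN_nonneg v))
  have hinj : Function.Injective Y.mulVecLin := by
    rw [← LinearMap.ker_eq_bot]
    exact LinearMap.ker_eq_bot'.mpr (fun v hv => hker v hv)
  have hrank : Y.rank = k := by
    rw [Matrix.rank, LinearMap.finrank_range_of_inj hinj, Module.finrank_fin_fun]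
  -- Yᵀ Y is a unit
  have hYtY : IsUnit (Yᵀ * Y) := by
    rw [← Matrix.mulVec_injective_iff_isUnit]
    intro v1 v2 hvv
    have h0 : (Yᵀ * Y) *ᵥ (v1 - v2) = 0 := by rw [Matrix.mulVec_sub, hvv, sub_self]
    have hdot : eN (Y *ᵥ (v1 - v2)) ^ 2 = 0 := by
      rw [eN_sq]
      calc (Y *ᵥ (v1 - v2)) ⬝ᵥ (Y *ᵥ (v1 - v2))
          = (v1 - v2) ⬝ᵥ (Yᵀ *ᵥ (Y *ᵥ (v1 - v2))) := dp_move _ _ _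
      _ = (v1 - v2) ⬝ᵥ ((Yᵀ * Y) *ᵥ (v1 - v2)) := by rw [Matrix.mulVec_mulVec]
      _ = 0 := by rw [h0, dotProduct_zero]
    have hYz : Y *ᵥ (v1 - v2) = 0 :=
      eN_eq_zero ((pow_eq_zero_iff (n := 2) (by norm_num)).mp hdot)
    have := hker _ hYz
    exact sub_eq_zero.mp this
  have hdet2 : IsUnit (Yᵀ * Y).det := (Matrix.isUnit_iff_isUnit_det _).mp hYtY
  have final : specNorm ((Yᵀ * Y)⁻¹ * Yᵀ) ≤ 1 / (lam * σ * (1/2 - c)) := by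
    apply specNorm_le_of hd
    intro v hv
    set w := ((Yᵀ * Y)⁻¹ * Yᵀ) *ᵥ v with hwdef
    have hEq : (Yᵀ * Y) *ᵥ w = Yᵀ *ᵥ v := by
      rw [hwdef, Matrix.mulVec_mulVec, ← Matrix.mul_assoc, Matrix.mul_nonsing_inv _ hdet2,
        Matrix.one_mul]
    have hY1 : eN (Y *ᵥ w) ≤ 1 := by
      have hsq : eN (Y *ᵥ w) ^ 2 = (Y *ᵥ w) ⬝ᵥ v := by
        rw [eN_sq]
        calc (Y *ᵥ w) ⬝ᵥ (Y *ᵥ w) = w ⬝ᵥ (Yᵀ *ᵥ (Y *ᵥ w)) := dp_move _ _ _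
        _ = w ⬝ᵥ ((Yᵀ * Y) *ᵥ w) := by rw [Matrix.mulVec_mulVec]
        _ = w ⬝ᵥ (Yᵀ *ᵥ v) := by rw [hEq]
        _ = (Y *ᵥ w) ⬝ᵥ v := (dp_move Y w v).symm
      have hle : (Y *ᵥ w) ⬝ᵥ v ≤ eN (Y *ᵥ w) * 1 := by
        have h := dot_le_eN (Y *ᵥ w) v; rwa [hv] at h
      nlinarith [eN_nonneg (Y *ᵥ w), hsq, hle]
    have hw2 : sigmaMin Y * eN w ≤ 1 := le_trans (sigmaMin_mulVec Y w) hY1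
    rw [le_div_iff₀ pos]
    nlinarith [mul_le_mul_of_nonneg_left main1 (eN_nonneg w), hw2, eN_nonneg w]
  exact ⟨main1, hσY, hrank, final⟩
end
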